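/- Let W, n, k be positive integers with n ≥ 2, and let X be a multiset of n positive integers all lying in the interval [W(1 - 1/n²), W]. If X is partitioned into k sub-multisets X₁, …, X_k such that Σ(X_i) = Σ(X)/k for every i ∈ [k], then |X_i| = n/k for every i ∈ [k]; in particular, k divides n. -/

import Mathlib

lemma aux_low (s : Multiset ℕ) (c b : ℕ) (h : ∀ x ∈ s, c ≤ x * b) :
    Multiset.card s * c ≤ s.sum * b := by
  induction s using Multiset.induction with
  | empty => simp
  | cons a s ih =>
    have ha := h a (Multiset.mem_cons_self a s)
    have hs := ih (fun x hx => h x (Multiset.mem_cons_of_mem hx))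
    simp only [Multiset.card_cons, Multiset.sum_cons, add_mul, one_mul]
    nlinarith

lemma aux_up (s : Multiset ℕ) (c : ℕ) (h : ∀ x ∈ s, x ≤ c) :
    s.sum ≤ Multiset.card s * c := by
  induction s using Multiset.induction with
  | empty => simp
  | cons a s ih =>
    have ha := h a (Multiset.mem_cons_self a s)
    have hs := ih (fun x hx => h x (Multiset.mem_cons_of_mem hx))
    simp only [Multiset.card_cons, Multiset.sum_cons, add_mul, one_mul]
    nlinarith

lemma aux_card_sum (k : ℕ) (P : Fin k → Multiset ℕ) :
    Multiset.card (∑ i, P i) = ∑ i, Multiset.card (P i) := by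
  induction (Finset.univ : Finset (Fin k)) using Finset.induction with
  | empty => simp
  | insert a s h ih => simp [Finset.sum_insert h, ih]

/-- Observation: if a multiset `X` of `n` positive integers all lying in
`[W(1 - 1/n²), W]` is partitioned into `k` sub-multisets of equal sum
`Σ(X)/k`, then each part has exactly `n/k` elements; in particular `k ∣ n`.
The interval condition `W(1 - 1/n²) ≤ x` is encoded as `W*(n² - 1) ≤ x*n²`,
and `Σ(X_i) = Σ(X)/k` as `Σ(X_i)·k = Σ(X)` (avoiding division). -/
theorem stmt_0 (W n k : ℕ) (hW : 0 < W) (hn : 0 < n) (hk : 0 < k)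
    (X : Multiset ℕ) (hcard : Multiset.card X = n)
    (hmem : ∀ x ∈ X, 0 < x ∧ W * (n ^ 2 - 1) ≤ x * n ^ 2 ∧ x ≤ W)
    (P : Fin k → Multiset ℕ)
    (hpart : ∑ i, P i = X)
    (hsum : ∀ i, (P i).sum * k = X.sum) :
    (∀ i, Multiset.card (P i) * k = n) ∧ k ∣ n := by
  have hPle : ∀ i, P i ≤ X := by
    intro i
    rw [← hpart]
    exact Finset.single_le_sum (f := P) (fun j _ => zero_le) (Finset.mem_univ i)
  have hPmem : ∀ i, ∀ x ∈ P i, x ∈ X := fun i x hx => Multiset.mem_of_le (hPle i) hx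
  have hcards : ∑ i, Multiset.card (P i) = n := by
    rw [← hcard, ← hpart]
    exact (aux_card_sum k P).symm
  -- X.sum is positive
  have hXpos : 0 < X.sum := by
    obtain ⟨x, hx⟩ := Multiset.card_pos_iff_exists_mem.mp (by omega : 0 < Multiset.card X)
    exact lt_of_lt_of_le (hmem x hx).1 (Multiset.single_le_sum (fun _ _ => zero_le) x hx)
  -- each part is nonempty
  have hmpos : ∀ i, 0 < Multiset.card (P i) := by
    intro i
    have h := hsum i
    rcases Nat.eq_zero_or_pos (Multiset.card (P i)) with h0 | h0
    · rw [Multiset.card_eq_zero] at h0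
      rw [h0] at h
      simp at h
      omega
    · exact h0
  -- n^2 - 1 + 1 = n^2 and 2*n ≤ n^2 (for n ≥ 2)
  have ha : n ^ 2 - 1 + 1 = n ^ 2 := Nat.succ_pred_eq_of_pos (pow_pos hn 2)
  have hXlow : n * (W * (n ^ 2 - 1)) ≤ X.sum * n ^ 2 := by
    have := aux_low X (W * (n ^ 2 - 1)) (n ^ 2) (fun x hx => (hmem x hx).2.1)
    rwa [hcard] at this
  have hXup : X.sum ≤ n * W := by
    have := aux_up X W (fun x hx => (hmem x hx).2.2)
    rwa [hcard] at this
  have key : ∀ i, Multiset.card (P i) * k = n := by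
    intro i
    set m := Multiset.card (P i) with hm
    have hlow : m * (W * (n ^ 2 - 1)) ≤ (P i).sum * n ^ 2 :=
      aux_low (P i) _ _ (fun x hx => (hmem x (hPmem i x hx)).2.1)
    have hup : (P i).sum ≤ m * W :=
      aux_up (P i) W (fun x hx => (hmem x (hPmem i x hx)).2.2)
    have hs := hsum i
    rcases Nat.lt_or_ge n 2 with hn2 | hn2
    · -- n = 1 : every part nonempty, so k ≤ n = 1, k = 1, m = 1
      have hn1 : n = 1 := by omega
      have hk1 : k ≤ 1 := by
        calc k = ∑ _i : Fin k, 1 := by simp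
        _ ≤ ∑ i, Multiset.card (P i) := Finset.sum_le_sum (fun j _ => hmpos j)
        _ = n := hcards
        _ = 1 := hn1
      have hmle : m ≤ n := by
        rw [← hcards]
        exact Finset.single_le_sum (f := fun j => Multiset.card (P j))
          (fun j _ => zero_le) (Finset.mem_univ i)
      have hm1 := hmpos i
      have hk1' : k = 1 := by omega
      have hm1' : m = 1 := by omega
      rw [hk1', hm1', hn1]
    · -- n ≥ 2
      have h2n : 2 * n ≤ n ^ 2 := by nlinarith
      have hAn : n + 1 ≤ n ^ 2 := by omega
      by_contra hne
      rcases Nat.lt_or_ge (m * k) n with hlt | hge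
      · -- m*k + 1 ≤ n : sum too small
        have h1 : X.sum ≤ m * W * k := by
          calc X.sum = (P i).sum * k := hs.symm
          _ ≤ m * W * k := Nat.mul_le_mul_right k hup
        have hmk : m * k ≤ n - 1 := by omega
        have h2 : n * (W * (n ^ 2 - 1)) ≤ (n - 1) * W * n ^ 2 := by
          calc n * (W * (n ^ 2 - 1)) ≤ X.sum * n ^ 2 := hXlow
          _ ≤ m * W * k * n ^ 2 := Nat.mul_le_mul_right _ h1
          _ ≤ (n - 1) * W * n ^ 2 := by
              have h3 : m * W * k ≤ (n - 1) * W := by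
                calc m * W * k = m * k * W := by ring
                _ ≤ (n - 1) * W := Nat.mul_le_mul_right W hmk
              exact Nat.mul_le_mul_right _ h3
        -- rewrite to avoid subtraction
        have hb : n - 1 + 1 = n := by omega
        have h4 : (n - 1 + 1) * (W * (n ^ 2 - 1)) ≤ (n - 1) * W * (n ^ 2 - 1 + 1) := by
          rw [hb, ha]; exact h2
        have hA : n - 1 + 1 + 1 ≤ n ^ 2 - 1 + 1 := by omega
        have h5 : W * (n - 1 + 1 + 1) ≤ W * (n ^ 2 - 1 + 1) :=
          Nat.mul_le_mul_left W hA
        nlinarith [h4, h5, hW]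
      · -- n + 1 ≤ m*k : sum too big
        have hge' : n + 1 ≤ m * k := by omega
        have h1 : m * k * (W * (n ^ 2 - 1)) ≤ X.sum * n ^ 2 := by
          calc m * k * (W * (n ^ 2 - 1)) = m * (W * (n ^ 2 - 1)) * k := by ring
          _ ≤ (P i).sum * n ^ 2 * k := Nat.mul_le_mul_right k hlow
          _ = (P i).sum * k * n ^ 2 := by ring
          _ = X.sum * n ^ 2 := by rw [hs]
        have h2 : (n + 1) * (W * (n ^ 2 - 1)) ≤ n * W * n ^ 2 := by
          calc (n + 1) * (W * (n ^ 2 - 1)) ≤ m * k * (W * (n ^ 2 - 1)) :=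
                Nat.mul_le_mul_right _ hge'
          _ ≤ X.sum * n ^ 2 := h1
          _ ≤ n * W * n ^ 2 := Nat.mul_le_mul_right _ hXup
        have h4 : (n + 1) * (W * (n ^ 2 - 1)) ≤ n * W * (n ^ 2 - 1 + 1) := by
          rw [ha]; exact h2
        have hA : n + 1 ≤ n ^ 2 - 1 := by omega
        have h5 : W * (n + 1) ≤ W * (n ^ 2 - 1) := Nat.mul_le_mul_left W hA
        nlinarith [h4, h5, hW]
  refine ⟨key, ⟨Multiset.card (P ⟨0, hk⟩), ?_⟩⟩
  rw [← key ⟨0, hk⟩]; ring
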